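/- Fix complex numbers x^{ia} for i, a ∈ {1,2}. On ℂ² × ℂ² with coordinates (u^+_1, u^+_2, u^-_1, u^-_2), define x^{±a} = Σ_i x^{ia} u^±_i, J = ½ (x^{+1} x^{−2} + x^{−1} x^{+2}), f^{+1} = e^{J} x^{+1}, f^{+2} = e^{−J} x^{+2}, and the derivation ∂^{++} = Σ_i u^+_i ∂/∂u^-_i. Then, identically on ℂ² × ℂ²: ∂^{++} f^{+1} = (f^{+1})² f^{+2} and ∂^{++} f^{+2} = −f^{+1} (f^{+2})². Equivalently, (f^{+1}, f^{+2}) solves the harmonic constraint ∂^{++} f^{+a} = Σ_b Ω^{ab} ∂𝓛^{+4}/∂f^{+b} for the Taub-NUT prepotential 𝓛^{+4}(f) = −½ (f^{+1})² (f^{+2})², where Ω^{12} = −Ω^{21} = −1, Ω^{11} = Ω^{22} = 0. -/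

import Mathlib

noncomputable section

/-- `x^{±a} = Σ_i x^{ia} u^±_i` (applied to `u = u^+` or `u = u^-`). -/
def xharm (x : Fin 2 → Fin 2 → ℂ) (a : Fin 2) (u : Fin 2 → ℂ) : ℂ := ∑ i, x i a * u i

/-- `J = ½ (x^{+1} x^{-2} + x^{-1} x^{+2})`. -/
def Jbr (x : Fin 2 → Fin 2 → ℂ) (up um : Fin 2 → ℂ) : ℂ :=
  (1 / 2 : ℂ) * (xharm x 0 up * xharm x 1 um + xharm x 0 um * xharm x 1 up)

/-- The solution `f^{+1} = e^J x^{+1}`, `f^{+2} = e^{-J} x^{+2}`. -/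
def fsol (x : Fin 2 → Fin 2 → ℂ) (a : Fin 2) (up um : Fin 2 → ℂ) : ℂ :=
  if a = 0 then Complex.exp (Jbr x up um) * xharm x 0 up
  else Complex.exp (-Jbr x up um) * xharm x 1 up

/-- The harmonic derivative `∂^{++} = Σ_i u^+_i ∂/∂u^-_i` applied to a function of
`(u^+, u^-)`. -/
noncomputable def dpp (g : (Fin 2 → ℂ) → (Fin 2 → ℂ) → ℂ) (up um : Fin 2 → ℂ) : ℂ :=
  ∑ i, up i * fderiv ℂ (g up) um (Pi.single i 1)

/-- The symplectic form `Ω^{ab}` with `Ω^{12} = -Ω^{21} = -1`. -/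
def OmUp : Fin 2 → Fin 2 → ℂ := fun a b =>
  if a = 0 ∧ b = 1 then -1 else if a = 1 ∧ b = 0 then 1 else 0

/-- The Taub-NUT prepotential `𝓛^{+4}(f) = -½ (f^{+1})² (f^{+2})²`. -/
def LTN : (Fin 2 → ℂ) → ℂ := fun f => -(1 / 2 : ℂ) * (f 0) ^ 2 * (f 1) ^ 2

def lin (x : Fin 2 → Fin 2 → ℂ) (a : Fin 2) : (Fin 2 → ℂ) →L[ℂ] ℂ :=
  ∑ i, x i a • (ContinuousLinearMap.proj i : (Fin 2 → ℂ) →L[ℂ] ℂ)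

lemma lin_apply (x : Fin 2 → Fin 2 → ℂ) (a : Fin 2) (v : Fin 2 → ℂ) :
    lin x a v = ∑ i, x i a * v i := by
  simp [lin]

lemma lin_single (x : Fin 2 → Fin 2 → ℂ) (a i : Fin 2) :
    lin x a (Pi.single i 1) = x i a := by
  rw [lin_apply]
  fin_cases i <;> simp [Fin.sum_univ_two, Pi.single_apply]

lemma hasF_xharm (x : Fin 2 → Fin 2 → ℂ) (a : Fin 2) (um : Fin 2 → ℂ) :
    HasFDerivAt (fun u => xharm x a u) (lin x a) um := by
  have h : (fun u => xharm x a u) = ⇑(lin x a) := by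
    funext u; rw [lin_apply]; rfl
  rw [h]; exact (lin x a).hasFDerivAt

def DJ (x : Fin 2 → Fin 2 → ℂ) (up : Fin 2 → ℂ) : (Fin 2 → ℂ) →L[ℂ] ℂ :=
  (1 / 2 : ℂ) • (xharm x 0 up • lin x 1 + xharm x 1 up • lin x 0)

lemma hasF_J (x : Fin 2 → Fin 2 → ℂ) (up um : Fin 2 → ℂ) :
    HasFDerivAt (fun u => Jbr x up u) (DJ x up) um := by
  have h1 := ((hasF_xharm x 1 um).const_mul (xharm x 0 up))
  have h0 := ((hasF_xharm x 0 um).mul_const (xharm x 1 up))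
  have h := (h1.add h0).const_mul ((1:ℂ)/2)
  simpa [Jbr, DJ] using h

lemma hasF_f0 (x : Fin 2 → Fin 2 → ℂ) (up um : Fin 2 → ℂ) :
    HasFDerivAt (fsol x 0 up)
      (xharm x 0 up • (Complex.exp (Jbr x up um) • DJ x up)) um := by
  have h := ((hasF_J x up um).cexp).mul_const (xharm x 0 up)
  have e : fsol x 0 up = fun y => Complex.exp (Jbr x up y) * xharm x 0 up := by
    funext u; simp [fsol]
  rw [e]; exact h

lemma hasF_f1 (x : Fin 2 → Fin 2 → ℂ) (up um : Fin 2 → ℂ) :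
    HasFDerivAt (fsol x 1 up)
      (xharm x 1 up • (Complex.exp (-Jbr x up um) • -DJ x up)) um := by
  have h := (((hasF_J x up um).neg).cexp).mul_const (xharm x 1 up)
  have e : fsol x 1 up = fun y => Complex.exp (-Jbr x up y) * xharm x 1 up := by
    funext u; simp [fsol]
  rw [e]; exact h

lemma dpp_f0 (x : Fin 2 → Fin 2 → ℂ) (up um : Fin 2 → ℂ) :
    dpp (fsol x 0) up um =
      Complex.exp (Jbr x up um) * xharm x 0 up * (xharm x 0 up * xharm x 1 up) := by
  have h := (hasF_f0 x up um).fderiv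
  simp only [dpp, h]
  simp only [ContinuousLinearMap.smul_apply, ContinuousLinearMap.add_apply, DJ,
    lin_single, smul_eq_mul, Fin.sum_univ_two, xharm]
  ring

lemma dpp_f1 (x : Fin 2 → Fin 2 → ℂ) (up um : Fin 2 → ℂ) :
    dpp (fsol x 1) up um =
      -(Complex.exp (-Jbr x up um) * xharm x 1 up * (xharm x 0 up * xharm x 1 up)) := by
  have h := (hasF_f1 x up um).fderiv
  simp only [dpp, h]
  simp only [ContinuousLinearMap.smul_apply, ContinuousLinearMap.add_apply,
    ContinuousLinearMap.neg_apply, DJ, lin_single, smul_eq_mul, Fin.sum_univ_two, xharm]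
  ring

lemma fderiv_LTN (p : Fin 2 → ℂ) (b : Fin 2) :
    fderiv ℂ LTN p (Pi.single b 1) =
      if b = 0 then -(p 0 * p 1 ^ 2) else -(p 0 ^ 2 * p 1) := by
  have h0 : HasFDerivAt (fun f : Fin 2 → ℂ => f 0)
      (ContinuousLinearMap.proj 0 : (Fin 2 → ℂ) →L[ℂ] ℂ) p := by
    have h := (ContinuousLinearMap.proj 0 : (Fin 2 → ℂ) →L[ℂ] ℂ).hasFDerivAt (x := p)
    have e : ⇑(ContinuousLinearMap.proj 0 : (Fin 2 → ℂ) →L[ℂ] ℂ)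
        = fun f : Fin 2 → ℂ => f 0 := by funext f; simp
    rwa [e] at h
  have h1 : HasFDerivAt (fun f : Fin 2 → ℂ => f 1)
      (ContinuousLinearMap.proj 1 : (Fin 2 → ℂ) →L[ℂ] ℂ) p := by
    have h := (ContinuousLinearMap.proj 1 : (Fin 2 → ℂ) →L[ℂ] ℂ).hasFDerivAt (x := p)
    have e : ⇑(ContinuousLinearMap.proj 1 : (Fin 2 → ℂ) →L[ℂ] ℂ)
        = fun f : Fin 2 → ℂ => f 1 := by funext f; simp
    rwa [e] at h
  have hL : LTN = fun f : Fin 2 → ℂ =>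
      -(1/2 : ℂ) * ((f 0 * f 0) * (f 1 * f 1)) := by
    funext f; simp [LTN]; ring
  have h := (((h0.mul h0).mul (h1.mul h1)).const_mul (-(1/2 : ℂ)))
  have h' : HasFDerivAt (fun f : Fin 2 → ℂ =>
      -(1/2 : ℂ) * ((f 0 * f 0) * (f 1 * f 1))) _ p := h
  rw [hL, h'.fderiv]
  fin_cases b <;>
    simp [ContinuousLinearMap.proj_apply, Pi.single_apply] <;> ring

/-- `f^{+1} = e^J x^{+1}`, `f^{+2} = e^{-J} x^{+2}` solve identically on
`ℂ² × ℂ²` the Taub-NUT harmonic constraints `∂^{++} f^{+1} = (f^{+1})² f^{+2}`,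
`∂^{++} f^{+2} = -f^{+1} (f^{+2})²`, i.e. `∂^{++} f^{+a} = Ω^{ab} ∂𝓛^{+4}/∂f^{+b}` for
`𝓛^{+4} = -½ (f^{+1})² (f^{+2})²`. -/
theorem stmt15 (x : Fin 2 → Fin 2 → ℂ) (up um : Fin 2 → ℂ) :
    (dpp (fsol x 0) up um = (fsol x 0 up um) ^ 2 * fsol x 1 up um ∧
     dpp (fsol x 1) up um = -(fsol x 0 up um * (fsol x 1 up um) ^ 2)) ∧
    (∀ a, dpp (fsol x a) up um =
      ∑ b, OmUp a b * fderiv ℂ LTN (fun c => fsol x c up um) (Pi.single b 1)) := by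
  have key : Complex.exp (Jbr x up um) * Complex.exp (-Jbr x up um) = 1 := by
    rw [← Complex.exp_add]; simp
  have hf0 : fsol x 0 up um = Complex.exp (Jbr x up um) * xharm x 0 up := by
    simp [fsol]
  have hf1 : fsol x 1 up um = Complex.exp (-Jbr x up um) * xharm x 1 up := by
    simp [fsol]
  have e0 : dpp (fsol x 0) up um = (fsol x 0 up um) ^ 2 * fsol x 1 up um := by
    rw [dpp_f0, hf0, hf1]
    linear_combination (-(Complex.exp (Jbr x up um)) * xharm x 0 up ^ 2 * xharm x 1 up) * key
  have e1 : dpp (fsol x 1) up um = -(fsol x 0 up um * (fsol x 1 up um) ^ 2) := by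
    rw [dpp_f1, hf0, hf1]
    linear_combination (Complex.exp (-Jbr x up um) * xharm x 0 up * xharm x 1 up ^ 2) * key
  refine ⟨⟨e0, e1⟩, ?_⟩
  intro a
  have ha : a = 0 ∨ a = 1 := by omega
  rcases ha with rfl | rfl
  · rw [e0, Fin.sum_univ_two, fderiv_LTN, fderiv_LTN]
    simp [OmUp]
  · rw [e1, Fin.sum_univ_two, fderiv_LTN, fderiv_LTN]
    simp [OmUp]
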